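/- Let q ∈ ℝ, and let ψ₁ : ℝ → ℝ be positive and twice differentiable. Suppose ψ_q and z are defined via ψ_q(z(s)) = ψ₁(s) and z'(s) = ψ₁(s)^{1-q} with z strictly monotone. If ψ₁ satisfies the second-order equation ψ₁' = K₄(ψ₁'' ) + K₅ψ₁ (the q = 1 Rego-Monteiro equation), then ψ_q satisfies ψ_q' = K₄ ψ_q^{1-q}(ψ_q'' + (1-q)(ψ_q')²/ψ_q) + K₅ ψ_q^q, where derivatives of ψ_q are with respect to z. -/

import Mathlib

theorem stmt19 (q K₄ K₅ : ℝ)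
    (ψ₁ ψ₁' ψ₁'' z ψq Dψq DDψq : ℝ → ℝ)
    (hψ₁ : ∀ s, HasDerivAt ψ₁ (ψ₁' s) s)
    (hψ₁' : ∀ s, HasDerivAt ψ₁' (ψ₁'' s) s)
    (hpos : ∀ s, 0 < ψ₁ s)
    (hz : ∀ s, HasDerivAt z (ψ₁ s ^ (1 - q)) s)
    (hmono : StrictMono z)
    (hψq : ∀ s, ψq (z s) = ψ₁ s)
    (hD : ∀ s, HasDerivAt ψq (Dψq (z s)) (z s))
    (hDD : ∀ s, HasDerivAt Dψq (DDψq (z s)) (z s))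
    (hODE : ∀ s, ψ₁' s = K₄ * ψ₁'' s + K₅ * ψ₁ s) :
    ∀ s, Dψq (z s) = K₄ * ψq (z s) ^ (1 - q) *
        (DDψq (z s) + (1 - q) * (Dψq (z s)) ^ 2 / ψq (z s)) +
      K₅ * ψq (z s) ^ q := by
  have hne : ∀ s, ψ₁ s ≠ 0 := fun s => (hpos s).ne'
  -- first derivative identity
  have eq1 : ∀ s, Dψq (z s) * ψ₁ s ^ (1 - q) = ψ₁' s := by
    intro s
    have h1 : HasDerivAt (fun t => ψq (z t)) (Dψq (z s) * ψ₁ s ^ (1 - q)) s :=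
      (hD s).comp s (hz s)
    have h2 : (fun t => ψq (z t)) = ψ₁ := funext hψq
    rw [h2] at h1
    exact h1.unique (hψ₁ s)
  have eq1' : ∀ s, Dψq (z s) = ψ₁' s * ψ₁ s ^ (q - 1) := by
    intro s
    have := eq1 s
    have hp : ψ₁ s ^ (1 - q) * ψ₁ s ^ (q - 1) = 1 := by
      rw [← Real.rpow_add (hpos s)]
      norm_num
    calc Dψq (z s) = Dψq (z s) * (ψ₁ s ^ (1 - q) * ψ₁ s ^ (q - 1)) := by rw [hp, mul_one]
      _ = (Dψq (z s) * ψ₁ s ^ (1 - q)) * ψ₁ s ^ (q - 1) := by ring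
      _ = ψ₁' s * ψ₁ s ^ (q - 1) := by rw [this]
  -- second derivative identity
  intro s
  have h3 : HasDerivAt (fun t => Dψq (z t)) (DDψq (z s) * ψ₁ s ^ (1 - q)) s :=
    (hDD s).comp s (hz s)
  have h4 : (fun t => Dψq (z t)) = fun t => ψ₁' t * ψ₁ t ^ (q - 1) := funext fun t => eq1' t
  rw [h4] at h3
  have h5 : HasDerivAt (fun t => ψ₁' t * ψ₁ t ^ (q - 1))
      (ψ₁'' s * ψ₁ s ^ (q - 1) + ψ₁' s * (ψ₁' s * (q - 1) * ψ₁ s ^ (q - 1 - 1))) s :=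
    (hψ₁' s).mul ((hψ₁ s).rpow_const (Or.inl (hne s)))
  have eq2 : DDψq (z s) * ψ₁ s ^ (1 - q)
      = ψ₁'' s * ψ₁ s ^ (q - 1) + ψ₁' s * (ψ₁' s * (q - 1) * ψ₁ s ^ (q - 1 - 1)) :=
    h3.unique h5
  -- solve for DDψq
  have hp1 : ψ₁ s ^ (1 - q) * ψ₁ s ^ (q - 1) = 1 := by
    rw [← Real.rpow_add (hpos s)]; norm_num
  have eq2' : DDψq (z s)
      = (ψ₁'' s * ψ₁ s ^ (q - 1) + ψ₁' s * (ψ₁' s * (q - 1) * ψ₁ s ^ (q - 1 - 1)))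
        * ψ₁ s ^ (q - 1) := by
    calc DDψq (z s) = DDψq (z s) * (ψ₁ s ^ (1 - q) * ψ₁ s ^ (q - 1)) := by rw [hp1, mul_one]
      _ = (DDψq (z s) * ψ₁ s ^ (1 - q)) * ψ₁ s ^ (q - 1) := by ring
      _ = _ := by rw [eq2]
  -- abbreviations
  set A := ψ₁ s with hA
  set a := A ^ (q - 1) with ha
  have hane : a ≠ 0 := (Real.rpow_pos_of_pos (hpos s) _).ne'
  have hinv : A ^ (1 - q) = a⁻¹ := by
    rw [ha, ← Real.rpow_neg (hpos s).le]
    norm_num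
    rfl
  have hq2 : A ^ (q - 1 - 1) = a / A := by
    rw [ha, eq_div_iff (hne s)]
    calc A ^ (q - 1 - 1) * A = A ^ (q - 1 - 1) * A ^ (1 : ℝ) := by rw [Real.rpow_one]
      _ = A ^ (q - 1 - 1 + 1) := by rw [← Real.rpow_add (hpos s)]
      _ = A ^ (q - 1) := by norm_num
  have hq : A ^ q = a * A := by
    rw [ha]
    calc A ^ q = A ^ (q - 1 + 1) := by norm_num
      _ = A ^ (q - 1) * A ^ (1 : ℝ) := Real.rpow_add (hpos s) _ _
      _ = A ^ (q - 1) * A := by rw [Real.rpow_one]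
  rw [hψq s, eq1' s, eq2', hinv, hq2, hq, hODE s]
  field_simp
  ring
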